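/- arXiv:2102.08236 — 4 statements merged into one kernel-verified Lean document; each statement's English description precedes it below -/
import Mathlib

section
/- For every integer k ≥ 1, the element s_k/k − (−1)^{k−1} e_k of ℚ[z_1,…,z_n] lies in m², the square of the ideal m generated by e_1,…,e_n. -/
open MvPolynomial Finset

lemma esymm_mem (n : ℕ) (i : ℕ) (hi : 1 ≤ i) :
    esymm (Fin n) ℚ i ∈ Ideal.span (esymm (Fin n) ℚ '' Set.Icc 1 n) := by
  rcases le_or_gt i n with h | h
  · exact Ideal.subset_span ⟨i, ⟨hi, h⟩, rfl⟩
  · have : esymm (Fin n) ℚ i = 0 := by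
      rw [esymm]
      have : (Finset.univ : Finset (Fin n)).powersetCard i = ∅ := by
        rw [Finset.powersetCard_eq_empty]
        simpa using h
      rw [this, Finset.sum_empty]
    rw [this]; exact Ideal.zero_mem _

lemma psum_mem (n : ℕ) (j : ℕ) (hj : 1 ≤ j) :
    psum (Fin n) ℚ j ∈ Ideal.span (esymm (Fin n) ℚ '' Set.Icc 1 n) := by
  induction j using Nat.strong_induction_on with
  | _ j ih =>
    rw [psum_eq_mul_esymm_sub_sum (Fin n) ℚ j hj]
    apply Ideal.sub_mem
    · exact Ideal.mul_mem_left _ _ (esymm_mem n j hj)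
    · apply Ideal.sum_mem
      rintro ⟨a, b⟩ hab
      simp only [Finset.mem_filter, Finset.mem_antidiagonal, Set.mem_Ioo] at hab
      exact Ideal.mul_mem_right _ _ (Ideal.mul_mem_left _ _ (esymm_mem n a hab.2.1))

open MvPolynomial in
/-- **Lemma (Newton's identities, first-order form).** In `ℚ[z_1,…,z_n]`, for every `k ≥ 1`
the element `s_k / k − (−1)^(k−1) e_k` lies in `m²`, where `e_k` is the `k`-th elementary
symmetric polynomial, `s_k` the `k`-th power sum, and `m` is the ideal generated by
`e_1, …, e_n`. -/
theorem stmt_2 (n k : ℕ) (hk : 1 ≤ k) :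
    (k : ℚ)⁻¹ • psum (Fin n) ℚ k -
        (-1 : MvPolynomial (Fin n) ℚ) ^ (k - 1) * esymm (Fin n) ℚ k ∈
      (Ideal.span (esymm (Fin n) ℚ '' Set.Icc 1 n)) ^ 2 := by
  set m := Ideal.span (esymm (Fin n) ℚ '' Set.Icc 1 n)
  have hk0 : (k : ℚ) ≠ 0 := Nat.cast_ne_zero.mpr (by omega)
  have hpow : (-1 : MvPolynomial (Fin n) ℚ) ^ (k - 1) = (-1) ^ (k + 1) := by
    obtain ⟨j, rfl⟩ : ∃ j, k = j + 1 := ⟨k - 1, by omega⟩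
    simp [pow_add, pow_succ]
  have key : (k : ℚ)⁻¹ • psum (Fin n) ℚ k -
      (-1 : MvPolynomial (Fin n) ℚ) ^ (k - 1) * esymm (Fin n) ℚ k =
      (k : ℚ)⁻¹ • (- ∑ a ∈ Finset.HasAntidiagonal.antidiagonal k with a.1 ∈ Set.Ioo 0 k,
        (-1 : MvPolynomial (Fin n) ℚ) ^ a.1 * esymm (Fin n) ℚ a.1 * psum (Fin n) ℚ a.2) := by
    rw [psum_eq_mul_esymm_sub_sum (Fin n) ℚ k hk, hpow]
    have h1 : ((-1 : MvPolynomial (Fin n) ℚ) ^ (k+1) * (k : MvPolynomial (Fin n) ℚ) *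
        esymm (Fin n) ℚ k) = (k : ℚ) • ((-1 : MvPolynomial (Fin n) ℚ) ^ (k+1) *
        esymm (Fin n) ℚ k) := by
      rw [Algebra.smul_def, algebraMap_eq, map_natCast]; ring
    rw [h1, smul_sub, smul_smul, inv_mul_cancel₀ hk0, one_smul, smul_neg]
    ring
  rw [key, Algebra.smul_def, algebraMap_eq]
  apply Ideal.mul_mem_left
  apply neg_mem
  apply Ideal.sum_mem
  rintro ⟨a, b⟩ hab
  simp only [Finset.mem_filter, Finset.mem_antidiagonal, Set.mem_Ioo] at hab
  have hb : 1 ≤ b := by simp at hab; omega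
  rw [mul_assoc]
  apply Ideal.mul_mem_left
  rw [sq]
  exact Ideal.mul_mem_mul (esymm_mem n a hab.2.1) (psum_mem n b hb)
end

section
/- For every integer k > n, the element s_k/k − ((−1)^k/2)·∑_{i=k−n}^{n} e_i e_{k−i} of ℚ[z_1,…,z_n] lies in m³, the cube of the ideal m generated by e_1,…,e_n (here the sum is empty when k > 2n). -/
open MvPolynomial Finset

private lemma my_esymm_eq_zero (n j : ℕ) (h : n < j) : esymm (Fin n) ℚ j = 0 := by
  rw [esymm, Finset.powersetCard_eq_empty.mpr (by simpa using h), Finset.sum_empty]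

private lemma my_newton (n k : ℕ) (h : 0 < k) :
    psum (Fin n) ℚ k = (-1) ^ (k + 1) * k * esymm (Fin n) ℚ k -
      ∑ i ∈ Finset.Ioo 0 k, (-1) ^ i * esymm (Fin n) ℚ i * psum (Fin n) ℚ (k - i) := by
  rw [psum_eq_mul_esymm_sub_sum _ _ k h]
  congr 1
  refine Finset.sum_nbij' (fun a => a.1) (fun i => (i, k - i)) ?_ ?_ ?_ ?_ ?_ <;>
    simp +contextual [Finset.mem_antidiagonal, Set.mem_Ioo]
  · omega
  · intro a b hab h1 h2; omega
  · intro a b hab h1 h2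
    left; rw [show b = k - a from by omega]

private lemma my_esymm_mem (n j : ℕ) (h : 1 ≤ j) :
    esymm (Fin n) ℚ j ∈ Ideal.span (esymm (Fin n) ℚ '' Set.Icc 1 n) := by
  rcases le_or_gt j n with hj | hj
  · exact Ideal.subset_span ⟨j, ⟨h, hj⟩, rfl⟩
  · rw [my_esymm_eq_zero n j hj]; exact zero_mem _

private lemma my_psum_mem (n : ℕ) : ∀ k, 1 ≤ k →
    psum (Fin n) ℚ k ∈ Ideal.span (esymm (Fin n) ℚ '' Set.Icc 1 n) := by
  intro k
  induction k using Nat.strong_induction_on with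
  | _ k ih =>
    intro hk
    rw [my_newton n k hk]
    refine sub_mem (Ideal.mul_mem_left _ _ (my_esymm_mem n k hk)) (Ideal.sum_mem _ ?_)
    intro i hi
    simp only [Finset.mem_Ioo] at hi
    exact Ideal.mul_mem_right _ _ (Ideal.mul_mem_left _ _ (my_esymm_mem n i hi.1))

private lemma my_order1 (n : ℕ) : ∀ k, 1 ≤ k →
    psum (Fin n) ℚ k - (-1) ^ (k + 1) * k * esymm (Fin n) ℚ k ∈
      (Ideal.span (esymm (Fin n) ℚ '' Set.Icc 1 n)) ^ 2 := by
  intro k hk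
  rw [my_newton n k hk, sub_sub_cancel_left, pow_two]
  refine neg_mem (Ideal.sum_mem _ ?_)
  intro i hi
  simp only [Finset.mem_Ioo] at hi
  exact Ideal.mul_mem_mul (Ideal.mul_mem_left _ _ (my_esymm_mem n i hi.1))
    (my_psum_mem n (k - i) (by omega))

private lemma my_order2 (n k : ℕ) (hk : 1 ≤ k) :
    psum (Fin n) ℚ k - (-1) ^ (k + 1) * k * esymm (Fin n) ℚ k +
      (-1) ^ (k + 1) *
        ∑ i ∈ Finset.Ioo 0 k,
          ((k - i : ℕ) : MvPolynomial (Fin n) ℚ) * (esymm (Fin n) ℚ i * esymm (Fin n) ℚ (k - i)) ∈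
      (Ideal.span (esymm (Fin n) ℚ '' Set.Icc 1 n)) ^ 3 := by
  have hcalc : psum (Fin n) ℚ k - (-1) ^ (k + 1) * k * esymm (Fin n) ℚ k +
      (-1) ^ (k + 1) *
        ∑ i ∈ Finset.Ioo 0 k,
          ((k - i : ℕ) : MvPolynomial (Fin n) ℚ) * (esymm (Fin n) ℚ i * esymm (Fin n) ℚ (k - i)) =
      ∑ i ∈ Finset.Ioo 0 k,
        ((-1) ^ (i + 1) *
          ((psum (Fin n) ℚ (k - i) -
              (-1) ^ ((k - i) + 1) * (k - i : ℕ) * esymm (Fin n) ℚ (k - i)) *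
            esymm (Fin n) ℚ i)) := by
    rw [my_newton n k hk, Finset.mul_sum]
    rw [show ∀ a b c : MvPolynomial (Fin n) ℚ, a - b - a + c = c - b from fun a b c => by ring]
    rw [← Finset.sum_sub_distrib]
    refine Finset.sum_congr rfl fun i hi => ?_
    simp only [Finset.mem_Ioo] at hi
    have hsign : ((-1 : MvPolynomial (Fin n) ℚ)) ^ (k - i) * (-1) ^ i = (-1) ^ k := by
      rw [← pow_add]; congr 1; omega
    linear_combination (((k - i : ℕ) : MvPolynomial (Fin n) ℚ) * esymm (Fin n) ℚ i *
      esymm (Fin n) ℚ (k - i)) * hsign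
  rw [hcalc]
  refine Ideal.sum_mem _ fun i hi => ?_
  simp only [Finset.mem_Ioo] at hi
  refine Ideal.mul_mem_left _ _ ?_
  rw [pow_succ]
  exact Ideal.mul_mem_mul (my_order1 n (k - i) (by omega)) (my_esymm_mem n i hi.1)

open MvPolynomial in
/-- **Lemma (Newton's identities, second-order form).** In `ℚ[z_1,…,z_n]`, for every `k > n`
the element `s_k / k − ((−1)^k / 2) · ∑_{i=k−n}^{n} e_i e_{k−i}` lies in `m³`, where `e_i` is
the `i`-th elementary symmetric polynomial, `s_k` the `k`-th power sum, and `m` is the ideal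
generated by `e_1, …, e_n` (the sum is empty when `k > 2n`). -/
theorem stmt_3 (n k : ℕ) (hk : n < k) :
    (k : ℚ)⁻¹ • psum (Fin n) ℚ k -
        ((-1 : ℚ) ^ k / 2) •
          ∑ i ∈ Finset.Icc (k - n) n, esymm (Fin n) ℚ i * esymm (Fin n) ℚ (k - i) ∈
      (Ideal.span (esymm (Fin n) ℚ '' Set.Icc 1 n)) ^ 3 := by
  have hk1 : 1 ≤ k := by omega
  have hk0 : (k : ℚ) ≠ 0 := by positivity
  set R := MvPolynomial (Fin n) ℚ
  set S : R := ∑ i ∈ Finset.Icc (k - n) n, esymm (Fin n) ℚ i * esymm (Fin n) ℚ (k - i) with hS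
  set T : R := ∑ i ∈ Finset.Ioo 0 k,
      ((k - i : ℕ) : R) * (esymm (Fin n) ℚ i * esymm (Fin n) ℚ (k - i)) with hT
  -- T is symmetric under i ↦ k - i
  have hTT : T = ∑ i ∈ Finset.Ioo 0 k, ((i : ℕ) : R) * (esymm (Fin n) ℚ i * esymm (Fin n) ℚ (k - i)) := by
    rw [hT]
    refine Finset.sum_nbij' (fun i => k - i) (fun i => k - i) ?_ ?_ ?_ ?_ ?_ <;>
        intro i hi <;> simp only [Finset.mem_Ioo] at hi ⊢ <;>
      first
        | omega
        | (rw [show k - (k - i) = i from by omega]; ring)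
  -- the sum over Ioo 0 k of e_i e_{k-i} equals S
  have hS0 : S = ∑ i ∈ Finset.Ioo 0 k, esymm (Fin n) ℚ i * esymm (Fin n) ℚ (k - i) := by
    rw [hS]
    refine Finset.sum_subset ?_ ?_
    · intro i hi
      simp only [Finset.mem_Icc, Finset.mem_Ioo] at hi ⊢
      omega
    · intro i hi hni
      simp only [Finset.mem_Icc, Finset.mem_Ioo] at hi hni
      rcases lt_or_ge n i with h | h
      · rw [my_esymm_eq_zero n i h, zero_mul]
      · rw [my_esymm_eq_zero n (k - i) (by omega), mul_zero]
  have h2T : (2 : ℚ) • T = (k : ℚ) • S := by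
    rw [two_smul]
    nth_rw 2 [hTT]
    rw [hT, ← Finset.sum_add_distrib, hS0, Finset.smul_sum]
    refine Finset.sum_congr rfl fun i hi => ?_
    simp only [Finset.mem_Ioo] at hi
    rw [← add_mul, smul_eq_C_mul, ← Nat.cast_add, show k - i + i = k from by omega,
      map_natCast]
  have hT2 : T = ((k : ℚ) / 2) • S := by
    rw [show ((k : ℚ) / 2) = (1 / 2 : ℚ) * (k : ℚ) from by ring, mul_smul, ← h2T, smul_smul]
    norm_num
  have hmem := my_order2 n k hk1
  rw [my_esymm_eq_zero n k hk] at hmem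
  have hgoal : (k : ℚ)⁻¹ • psum (Fin n) ℚ k - ((-1 : ℚ) ^ k / 2) • S =
      (k : ℚ)⁻¹ • (psum (Fin n) ℚ k - (-1) ^ (k + 1) * (k : R) * 0 + (-1) ^ (k + 1) * T) := by
    rw [mul_zero, sub_zero, hT2, smul_add]
    rw [show ((-1 : R)) ^ (k + 1) = C ((-1 : ℚ) ^ (k + 1)) from by rw [map_pow, map_neg, map_one],
      ← smul_eq_C_mul, smul_smul, smul_smul]
    rw [show (k : ℚ)⁻¹ * (-1 : ℚ) ^ (k + 1) * ((k : ℚ) / 2) = -((-1 : ℚ) ^ k / 2) from by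
      field_simp; ring]
    rw [neg_smul, sub_eq_add_neg]
  rw [hgoal]
  rw [smul_eq_C_mul]
  exact Ideal.mul_mem_left _ _ hmem
end

section
/- Let E be the elliptic curve over ℚ given by the Weierstrass equation y² + xy = x³ − x. The affine point T = (0,0) lies on E, satisfies 2T = O (so T is a 2-torsion point), and every point P ∈ E(ℚ) with 2P = O equals either the point at infinity O or T. In other words, T = (0,0) is the unique nontrivial rational 2-torsion point of E. -/
/-- The elliptic curve `y² + xy = x³ − x` over `ℚ` (the modular curve `X₀⁺(65)`),
as a Weierstrass curve with coefficients `a₁ = 1`, `a₂ = 0`, `a₃ = 0`, `a₄ = −1`, `a₆ = 0`. -/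
def E65 : WeierstrassCurve ℚ := ⟨1, 0, 0, -1, 0⟩

lemma E65_a₁ : E65.a₁ = 1 := rfl
lemma E65_a₂ : E65.a₂ = 0 := rfl
lemma E65_a₃ : E65.a₃ = 0 := rfl
lemma E65_a₄ : E65.a₄ = -1 := rfl
lemma E65_a₆ : E65.a₆ = 0 := rfl

lemma not_isSquare_65 : ¬ IsSquare (65 : ℚ) := by
  rw [show (65 : ℚ) = ((65 : ℕ) : ℚ) by norm_num, Rat.isSquare_natCast_iff]
  rintro ⟨r, hr⟩
  have hr8 : r ≤ 8 := by nlinarith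
  interval_cases r <;> omega

/-- **The unique nontrivial rational 2-torsion point of `y² + xy = x³ − x`.**
The affine point `T = (0, 0)` lies on the curve, satisfies `2T = O`, and every rational point
`P` with `2P = O` equals `O` or `T`. -/
theorem stmt_8 :
    ∃ hT : E65.toAffine.Nonsingular 0 0,
      2 • (WeierstrassCurve.Affine.Point.some 0 0 hT) = 0 ∧
        ∀ P : E65.toAffine.Point, 2 • P = 0 →
          P = 0 ∨ P = WeierstrassCurve.Affine.Point.some 0 0 hT := by
  have hT : E65.toAffine.Nonsingular 0 0 := by
    rw [WeierstrassCurve.Affine.nonsingular_iff, WeierstrassCurve.Affine.equation_iff]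
    simp [E65_a₁, E65_a₂, E65_a₃, E65_a₄, E65_a₆]
  refine ⟨hT, ?_, ?_⟩
  · rw [two_smul]
    exact WeierstrassCurve.Affine.Point.add_self_of_Y_eq (by
      simp [WeierstrassCurve.Affine.negY, E65_a₁, E65_a₃])
  · rintro (_ | @⟨x, y, h⟩) h2
    · exact Or.inl rfl
    right
    rw [two_smul] at h2
    by_cases hy : y = E65.toAffine.negY x y
    · -- from hy : 2y + x = 0
      have hy' : 2 * y + x = 0 := by
        rw [WeierstrassCurve.Affine.negY, E65_a₁, E65_a₃] at hy
        linarith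
      have heq := h.1
      rw [WeierstrassCurve.Affine.equation_iff, E65_a₁, E65_a₂, E65_a₃, E65_a₄, E65_a₆] at heq
      -- y = -x/2; substitute
      have hyx : y = -x / 2 := by linarith
      have hx : x * (4 * x ^ 2 + x - 4) = 0 := by
        rw [hyx] at heq
        field_simp at heq
        nlinarith [heq]
      have hx0 : x = 0 := by
        rcases mul_eq_zero.mp hx with h0 | h0
        · exact h0
        · exfalso
          apply not_isSquare_65
          exact ⟨8 * x + 1, by nlinarith⟩
      have hy0 : y = 0 := by rw [hx0] at hyx; simpa using hyx
      subst hx0 hy0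
      rfl
    · exfalso
      rw [WeierstrassCurve.Affine.Point.add_self_of_Y_ne hy] at h2
      exact WeierstrassCurve.Affine.Point.some_ne_zero _ h2
end

section
/- Let E be the elliptic curve over ℚ given by the Weierstrass equation y² + xy = x³ − x, and let Q = (1,0) ∈ E(ℚ). Then there exists a point P in E(ℚ(√5)) with 2P = Q, and there exists a point P' in E(ℚ(√13)) with 2P' = Q (where Q is regarded as a point of E over these quadratic fields via base change). -/
/-- The real quadratic field `ℚ(√5)`, as an intermediate field of `ℝ/ℚ`. -/
noncomputable def Qsqrt5 : IntermediateField ℚ ℝ := IntermediateField.adjoin ℚ {Real.sqrt 5}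

/-- The real quadratic field `ℚ(√13)`, as an intermediate field of `ℝ/ℚ`. -/
noncomputable def Qsqrt13 : IntermediateField ℚ ℝ := IntermediateField.adjoin ℚ {Real.sqrt 13}

open WeierstrassCurve.Affine in
lemma some_congr' {F : Type*} [Field F] {W : WeierstrassCurve.Affine F}
    {x₁ x₂ y₁ y₂ : F} (hx : x₁ = x₂) (hy : y₁ = y₂) (h₁ : W.Nonsingular x₁ y₁)
    (h₂ : W.Nonsingular x₂ y₂) : Point.some _ _ h₁ = Point.some _ _ h₂ := by
  subst hx; subst hy; rfl

open WeierstrassCurve.Affine in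
lemma halve_aux {F : Type*} [Field F] [DecidableEq F] {W : WeierstrassCurve.Affine F}
    {x y : F} (hP : W.Nonsingular x y) (hQ : W.Nonsingular 1 0)
    (hy : y ≠ W.negY x y)
    (hX : W.addX x x (W.slope x x y y) = 1)
    (hY : W.addY x x y (W.slope x x y y) = 0) :
    ∃ P : W.Point, 2 • P = .some _ _ hQ := by
  refine ⟨.some _ _ hP, ?_⟩
  rw [two_smul, WeierstrassCurve.Affine.Point.add_self_of_Y_ne hy]
  exact some_congr' hX hY _ _

open WeierstrassCurve.Affine in
lemma halve5 {F : Type*} [Field F] [CharZero F] [DecidableEq F] {W : WeierstrassCurve.Affine F}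
    (h1 : W.a₁ = 1) (h2 : W.a₂ = 0) (h3 : W.a₃ = 0) (h4 : W.a₄ = -1) (h6 : W.a₆ = 0)
    (s : F) (hs : s ^ 2 = 5) :
    ∃ hQ : W.Nonsingular 1 0, ∃ P : W.Point, 2 • P = .some _ _ hQ := by
  have hQ : W.Nonsingular 1 0 := by
    rw [WeierstrassCurve.Affine.nonsingular_iff, WeierstrassCurve.Affine.equation_iff,
      h1, h2, h3, h4, h6]
    exact ⟨by ring, Or.inl (by norm_num)⟩
  set x : F := (1 + s) / 2 with hxdef
  set y : F := (-3 - s) / 2 with hydef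
  have hsne : s ≠ -5 := by intro h; rw [h] at hs; norm_num at hs
  have hy0 : y ≠ -y - 1 * x - 0 := by
    intro h; exact hsne (by linear_combination (-2 : F) * h)
  have hy : y ≠ W.negY x y := by rw [WeierstrassCurve.Affine.negY, h1, h3]; exact hy0
  have hP : W.Nonsingular x y := by
    rw [WeierstrassCurve.Affine.nonsingular_iff, WeierstrassCurve.Affine.equation_iff,
      h1, h2, h3, h4, h6]
    exact ⟨by linear_combination (-(s + 3) / 8) * hs, Or.inr hy0⟩
  have hden : y - W.negY x y ≠ 0 := sub_ne_zero.mpr hy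
  have hL : W.slope x x y y = -(3 + s) / 2 := by
    rw [WeierstrassCurve.Affine.slope_of_Y_ne rfl hy, div_eq_iff hden,
      WeierstrassCurve.Affine.negY, h1, h2, h3, h4]
    linear_combination (1 / 2 : F) * hs
  have hX : W.addX x x (W.slope x x y y) = 1 := by
    rw [hL, WeierstrassCurve.Affine.addX, h1, h2]
    linear_combination (1 / 4 : F) * hs
  have hY : W.addY x x y (W.slope x x y y) = 0 := by
    rw [WeierstrassCurve.Affine.addY, WeierstrassCurve.Affine.negAddY,
      WeierstrassCurve.Affine.addX, WeierstrassCurve.Affine.negY, hL, h1, h2, h3]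
    linear_combination ((s - 1) / 8 : F) * hs
  exact ⟨hQ, halve_aux hP hQ hy hX hY⟩

open WeierstrassCurve.Affine in
lemma halve13 {F : Type*} [Field F] [CharZero F] [DecidableEq F] {W : WeierstrassCurve.Affine F}
    (h1 : W.a₁ = 1) (h2 : W.a₂ = 0) (h3 : W.a₃ = 0) (h4 : W.a₄ = -1) (h6 : W.a₆ = 0)
    (s : F) (hs : s ^ 2 = 13) :
    ∃ hQ : W.Nonsingular 1 0, ∃ P : W.Point, 2 • P = .some _ _ hQ := by
  have hQ : W.Nonsingular 1 0 := by
    rw [WeierstrassCurve.Affine.nonsingular_iff, WeierstrassCurve.Affine.equation_iff,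
      h1, h2, h3, h4, h6]
    exact ⟨by ring, Or.inl (by norm_num)⟩
  set x : F := (3 + s) / 2 with hxdef
  set y : F := (5 + s) / 2 with hydef
  have hsne : s ≠ -13 / 3 := by
    intro h; rw [h] at hs; norm_num at hs
  have hy0 : y ≠ -y - 1 * x - 0 := by
    intro h; exact hsne (by linear_combination (2 / 3 : F) * h)
  have hy : y ≠ W.negY x y := by rw [WeierstrassCurve.Affine.negY, h1, h3]; exact hy0
  have hP : W.Nonsingular x y := by
    rw [WeierstrassCurve.Affine.nonsingular_iff, WeierstrassCurve.Affine.equation_iff,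
      h1, h2, h3, h4, h6]
    exact ⟨by linear_combination (-(s + 5) / 8) * hs, Or.inr hy0⟩
  have hden : y - W.negY x y ≠ 0 := sub_ne_zero.mpr hy
  have hL : W.slope x x y y = (1 + s) / 2 := by
    rw [WeierstrassCurve.Affine.slope_of_Y_ne rfl hy, div_eq_iff hden,
      WeierstrassCurve.Affine.negY, h1, h2, h3, h4]
    ring
  have hX : W.addX x x (W.slope x x y y) = 1 := by
    rw [hL, WeierstrassCurve.Affine.addX, h1, h2]
    linear_combination (1 / 4 : F) * hs
  have hY : W.addY x x y (W.slope x x y y) = 0 := by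
    rw [WeierstrassCurve.Affine.addY, WeierstrassCurve.Affine.negAddY,
      WeierstrassCurve.Affine.addX, WeierstrassCurve.Affine.negY, hL, h1, h2, h3]
    linear_combination (-(s + 1) / 8 : F) * hs
  exact ⟨hQ, halve_aux hP hQ hy hX hY⟩

/-- **Halving `Q = (1, 0)` over `ℚ(√5)` and `ℚ(√13)`.**  On the base change of the curve
`y² + xy = x³ − x` to `ℚ(√5)` there is a point `P` with `2P = Q = (1, 0)`, and likewise on the
base change to `ℚ(√13)` there is a point `P'` with `2P' = Q`. -/
theorem stmt_9 :
    (∃ hQ : (E65.baseChange Qsqrt5).toAffine.Nonsingular 1 0,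
      ∃ P : (E65.baseChange Qsqrt5).toAffine.Point,
        2 • P = WeierstrassCurve.Affine.Point.some _ _ hQ) ∧
    (∃ hQ : (E65.baseChange Qsqrt13).toAffine.Nonsingular 1 0,
      ∃ P : (E65.baseChange Qsqrt13).toAffine.Point,
        2 • P = WeierstrassCurve.Affine.Point.some _ _ hQ) := by

  constructor
  · have hmem : Real.sqrt 5 ∈ Qsqrt5 := IntermediateField.subset_adjoin ℚ _ rfl
    have hs : (⟨Real.sqrt 5, hmem⟩ : Qsqrt5) ^ 2 = 5 := by
      ext
      push_cast
      exact Real.sq_sqrt (by norm_num)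
    exact halve5 (by simp [E65, WeierstrassCurve.baseChange])
      (by simp [E65, WeierstrassCurve.baseChange])
      (by simp [E65, WeierstrassCurve.baseChange])
      (by simp [E65, WeierstrassCurve.baseChange])
      (by simp [E65, WeierstrassCurve.baseChange]) _ hs
  · have hmem : Real.sqrt 13 ∈ Qsqrt13 := IntermediateField.subset_adjoin ℚ _ rfl
    have hs : (⟨Real.sqrt 13, hmem⟩ : Qsqrt13) ^ 2 = 13 := by
      ext
      push_cast
      exact Real.sq_sqrt (by norm_num)
    exact halve13 (by simp [E65, WeierstrassCurve.baseChange])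
      (by simp [E65, WeierstrassCurve.baseChange])
      (by simp [E65, WeierstrassCurve.baseChange])
      (by simp [E65, WeierstrassCurve.baseChange])
      (by simp [E65, WeierstrassCurve.baseChange]) _ hs
end
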